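/- If A is a symplectic spectral set in Z_{p^m} × Z_{p^m} with p^{2m} > |A| ≥ p^{2m-1}, then A is a tile of Z_{p^m} × Z_{p^m} and |A| = p^{2m-1}. -/

import Mathlib

open Complex
open scoped Classical

/-- The character value `e^{2πi t/n}` for `t : ZMod n`. -/
noncomputable def charVal (n : ℕ) (t : ZMod n) : ℂ :=
  Complex.exp (2 * Real.pi * Complex.I * (t.val : ℂ) / (n : ℂ))

/-- The symplectic form `⟨x,y⟩ = x₁y₂ - x₂y₁` on `ZMod n × ZMod n`. -/
def sympForm {n : ℕ} (x y : ZMod n × ZMod n) : ZMod n :=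
  x.1 * y.2 - x.2 * y.1

/-- Symplectic Fourier transform of the indicator of `A`. -/
noncomputable def symFT {n : ℕ} (A : Set (ZMod n × ZMod n)) (ξ : ZMod n × ZMod n) : ℂ :=
  ∑ᶠ a ∈ A, charVal n (sympForm a ξ)

/-- Euclidean Fourier transform of the indicator of `A`. -/
noncomputable def euclFT {n : ℕ} (A : Set (ZMod n × ZMod n)) (ξ : ZMod n × ZMod n) : ℂ :=
  ∑ᶠ a ∈ A, charVal n (a.1 * ξ.1 + a.2 * ξ.2)

/-- Difference set `ΔA = {a - a' : a,a' ∈ A, a ≠ a'}`. -/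
def diffSet {G : Type*} [AddGroup G] (A : Set G) : Set G :=
  {d | ∃ a ∈ A, ∃ a' ∈ A, a ≠ a' ∧ d = a - a'}

/-- `A ⊕ B = G`: every element of `G` is uniquely a sum `a + b` with `a ∈ A`, `b ∈ B`. -/
def IsTilingPair {G : Type*} [AddCommGroup G] (A B : Set G) : Prop :=
  ∀ g : G, ∃! p : G × G, p.1 ∈ A ∧ p.2 ∈ B ∧ p.1 + p.2 = g

/-- Symplectic orthogonal set `H^{⊥s}`. -/
def sympPerp {n : ℕ} (H : Set (ZMod n × ZMod n)) : Set (ZMod n × ZMod n) :=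
  {g | ∀ h ∈ H, sympForm g h = 0}

/-- `(A,S)` is a symplectic spectral pair: `|A| = |S|` and `ΔS ⊆ Z(1̂_A^{sym})`. -/
def IsSympSpectralPair {n : ℕ} (A S : Set (ZMod n × ZMod n)) : Prop :=
  Nat.card A = Nat.card S ∧ ∀ s ∈ S, ∀ s' ∈ S, s ≠ s' → symFT A (s - s') = 0

namespace SpecAux

noncomputable def zeta (q : ℕ) : ℂ := Complex.exp (2 * Real.pi * Complex.I / q)

variable {q : ℕ} [NeZero q]

lemma hzeta (q : ℕ) [NeZero q] : IsPrimitiveRoot (zeta q) q :=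
  Complex.isPrimitiveRoot_exp q (NeZero.ne q)

lemma zeta_pow_mod (a : ℕ) : (zeta q) ^ (a % q) = zeta q ^ a := by
  conv_rhs => rw [← Nat.mod_add_div a q]
  rw [pow_add, pow_mul, (hzeta q).pow_eq_one, one_pow, mul_one]

lemma charVal_eq_pow (t : ZMod q) : charVal q t = zeta q ^ t.val := by
  rw [zeta, ← Complex.exp_nat_mul, charVal]
  congr 1
  ring

lemma charVal_zero : charVal q (0 : ZMod q) = 1 := by
  rw [charVal_eq_pow, ZMod.val_zero, pow_zero]

lemma charVal_add (x y : ZMod q) : charVal q (x + y) = charVal q x * charVal q y := by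
  rw [charVal_eq_pow, charVal_eq_pow, charVal_eq_pow, ← pow_add, ZMod.val_add, zeta_pow_mod]

lemma star_charVal (t : ZMod q) : star (charVal q t) = charVal q (-t) := by
  have hmul : charVal q t * charVal q (-t) = 1 := by
    rw [← charVal_add, add_neg_cancel, charVal_zero]
  have hconj : star (charVal q t) = (charVal q t)⁻¹ := by
    have h1 : (starRingEnd ℂ) (charVal q t) = Complex.exp (-(2 * Real.pi * Complex.I * (t.val : ℂ) / (q : ℂ))) := by
      rw [charVal, ← Complex.exp_conj]
      congr 1
      simp only [map_div₀, map_mul, Complex.conj_I, Complex.conj_natCast, map_natCast, map_ofNat, Complex.conj_ofReal]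
      ring
    rw [show star (charVal q t) = (starRingEnd ℂ) (charVal q t) from rfl, h1, Complex.exp_neg, charVal]
  rw [hconj]
  exact inv_eq_of_mul_eq_one_right hmul

lemma charVal_ne_zero (t : ZMod q) : charVal q t ≠ 0 := by
  rw [charVal_eq_pow]
  exact pow_ne_zero _ (Complex.exp_ne_zero _)

lemma sum_zmod (c : ZMod q) (hc : c ≠ 0) : ∑ x : ZMod q, charVal q (c * x) = 0 := by
  have hvalpos : 0 < c.val := Nat.pos_of_ne_zero (fun h => hc ((ZMod.val_eq_zero c).mp h))
  have h1 : charVal q c ≠ 1 := by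
    rw [charVal_eq_pow]
    exact (hzeta q).pow_ne_one_of_pos_of_lt hvalpos.ne' (ZMod.val_lt c)
  have key : (∑ x : ZMod q, charVal q (c * x)) * charVal q c = ∑ x : ZMod q, charVal q (c * x) := by
    rw [Finset.sum_mul]
    refine Fintype.sum_equiv (Equiv.addRight (1 : ZMod q)) _ _ (fun x => ?_)
    rw [← charVal_add]
    congr 1
    simp [Equiv.coe_addRight]
    ring
  have h2 : (∑ x : ZMod q, charVal q (c * x)) * (charVal q c - 1) = 0 := by
    rw [mul_sub, key, mul_one, sub_self]
  rcases mul_eq_zero.mp h2 with h | h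
  · exact h
  · exact absurd (sub_eq_zero.mp h) h1

lemma sympForm_zero_right (a : ZMod q × ZMod q) : sympForm a (0 : ZMod q × ZMod q) = 0 := by
  simp [sympForm]

lemma sympForm_smul (s : ZMod q × ZMod q) (u : ZMod q) (ξ : ZMod q × ZMod q) :
    sympForm s (u • ξ) = u * sympForm s ξ := by
  simp only [sympForm, Prod.smul_fst, Prod.smul_snd, smul_eq_mul]
  ring

lemma symFT_eq_sum (A : Set (ZMod q × ZMod q)) (ξ : ZMod q × ZMod q) :
    symFT A ξ = ∑ a ∈ (Set.toFinite A).toFinset, charVal q (sympForm a ξ) :=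
  finsum_mem_eq_finite_toFinset_sum _ _

lemma sum_G (d : ZMod q × ZMod q) (hd : d ≠ 0) :
    ∑ ξ : ZMod q × ZMod q, charVal q (sympForm d ξ) = 0 := by
  have expand : ∀ ξ : ZMod q × ZMod q,
      charVal q (sympForm d ξ) = charVal q ((-d.2) * ξ.1) * charVal q (d.1 * ξ.2) := by
    intro ξ
    rw [← charVal_add]
    congr 1
    simp [sympForm]
    ring
  rw [Finset.sum_congr rfl fun ξ _ => expand ξ, Fintype.sum_prod_type]
  have step : ∑ x : ZMod q, ∑ y : ZMod q, charVal q (-d.2 * x) * charVal q (d.1 * y)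
      = (∑ x : ZMod q, charVal q (-d.2 * x)) * (∑ y : ZMod q, charVal q (d.1 * y)) :=
    (Finset.sum_mul_sum _ _ _ _).symm
  rw [step]
  have hcase : d.1 ≠ 0 ∨ d.2 ≠ 0 := by
    by_contra hcon
    push_neg at hcon
    exact hd (Prod.ext hcon.1 hcon.2)
  rcases hcase with h | h
  · rw [sum_zmod d.1 h, mul_zero]
  · rw [sum_zmod (-d.2) (neg_ne_zero.mpr h), zero_mul]

end SpecAux

namespace Part2
open SpecAux

variable {q : ℕ} [NeZero q]

lemma galois (S : Set (ZMod q × ZMod q)) (ξ : ZMod q × ZMod q)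
    (u : ZMod q) (hu : IsUnit u) (h : symFT S (u • ξ) = 0) : symFT S ξ = 0 := by
  classical
  have hq : 0 < q := Nat.pos_of_ne_zero (NeZero.ne q)
  set FS := (Set.toFinite S).toFinset with hFS
  set P : Polynomial ℚ := ∑ s ∈ FS, Polynomial.X ^ (sympForm s ξ).val with hPdef
  have hP : ∀ z : ℂ, (Polynomial.aeval z) P = ∑ s ∈ FS, z ^ (sympForm s ξ).val := by
    intro z
    rw [hPdef, map_sum]
    exact Finset.sum_congr rfl fun s _ => by simp
  obtain ⟨w, rfl⟩ := hu
  have hcop : Nat.Coprime ((w : ZMod q)).val q := ZMod.val_coe_unit_coprime w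
  have hζ := hzeta q
  have hζu : IsPrimitiveRoot (zeta q ^ ((w : ZMod q)).val) q := hζ.pow_of_coprime _ hcop
  have e2 : symFT S ((w : ZMod q) • ξ) = (Polynomial.aeval (zeta q ^ ((w : ZMod q)).val)) P := by
    rw [symFT_eq_sum, hP]
    refine Finset.sum_congr rfl fun s _ => ?_
    rw [charVal_eq_pow, sympForm_smul, ZMod.val_mul, zeta_pow_mod, pow_mul]
  have e1 : symFT S ξ = (Polynomial.aeval (zeta q)) P := by
    rw [symFT_eq_sum, hP]
    exact Finset.sum_congr rfl fun s _ => by rw [charVal_eq_pow]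
  rw [e2] at h
  have hdvd : minpoly ℚ (zeta q ^ ((w : ZMod q)).val) ∣ P := minpoly.dvd ℚ _ h
  have hmin : minpoly ℚ (zeta q ^ ((w : ZMod q)).val) = minpoly ℚ (zeta q) := by
    rw [← Polynomial.cyclotomic_eq_minpoly_rat hζu hq, ← Polynomial.cyclotomic_eq_minpoly_rat hζ hq]
  obtain ⟨Q, hQ⟩ := hdvd
  rw [e1, hQ, map_mul, hmin, minpoly.aeval, zero_mul]

lemma exists_v (S : Set (ZMod q × ZMod q)) (hSne : S ≠ Set.univ) (hS : S.Nonempty) :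
    ∃ v : ZMod q × ZMod q, v ≠ 0 ∧ symFT S v ≠ 0 := by
  classical
  by_contra hcon
  push_neg at hcon
  obtain ⟨y, hy⟩ := (Set.ne_univ_iff_exists_notMem S).mp hSne
  set FS := (Set.toFinite S).toFinset with hFS
  have hsym : ∀ ξ, symFT S ξ = ∑ s ∈ FS, charVal q (sympForm s ξ) :=
    fun ξ => finsum_mem_eq_finite_toFinset_sum _ _
  have hzero0 : symFT S (0 : ZMod q × ZMod q) = (FS.card : ℂ) := by
    rw [hsym]
    rw [Finset.sum_congr rfl fun s _ => by rw [sympForm_zero_right, charVal_zero]]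
    simp
  have hT0 : ∑ ξ : ZMod q × ZMod q, symFT S ξ * charVal q (sympForm (-y) ξ) = (FS.card : ℂ) := by
    rw [Finset.sum_eq_single_of_mem 0 (Finset.mem_univ 0)
      (fun ξ _ hξ => by rw [hcon ξ hξ, zero_mul])]
    rw [hzero0, sympForm_zero_right, charVal_zero, mul_one]
  have hT1 : ∑ ξ : ZMod q × ZMod q, symFT S ξ * charVal q (sympForm (-y) ξ) = 0 := by
    have hterm : ∀ ξ, symFT S ξ * charVal q (sympForm (-y) ξ)
        = ∑ s ∈ FS, charVal q (sympForm (s - y) ξ) := by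
      intro ξ
      rw [hsym, Finset.sum_mul]
      refine Finset.sum_congr rfl fun s _ => ?_
      rw [← charVal_add]
      congr 1
      simp [sympForm]
      ring
    rw [Finset.sum_congr rfl fun ξ _ => hterm ξ, Finset.sum_comm]
    refine Finset.sum_eq_zero fun s hs => ?_
    refine sum_G _ (sub_ne_zero.mpr fun hc => hy ?_)
    rw [← hc]
    exact (Set.Finite.mem_toFinset _).mp hs
  have hcard0 : FS.card = 0 := by exact_mod_cast hT0.symm.trans hT1
  obtain ⟨s0, hs0⟩ := hS
  have : s0 ∈ FS := (Set.Finite.mem_toFinset _).mpr hs0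
  rw [Finset.card_eq_zero.mp hcard0] at this
  exact absurd this (Finset.notMem_empty s0)

end Part2

namespace Part3
open SpecAux

variable {q : ℕ} [NeZero q]

lemma sympForm_comb (a x y : ZMod q × ZMod q) :
    sympForm a x - sympForm a y = sympForm a (x - y) := by
  simp [sympForm]
  ring

lemma key_transpose {A S : Set (ZMod q × ZMod q)}
    (hAS : Nat.card A = Nat.card S)
    (hzero : ∀ s ∈ S, ∀ s' ∈ S, s ≠ s' → symFT A (s - s') = 0)
    (hA : A.Nonempty) :
    ∀ a ∈ A, ∀ a' ∈ A, a ≠ a' → symFT S (a' - a) = 0 := by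
  classical
  set FA := (Set.toFinite A).toFinset with hFAdef
  set FS := (Set.toFinite S).toFinset with hFSdef
  have hmemA : ∀ x, x ∈ FA ↔ x ∈ A := fun x => Set.Finite.mem_toFinset _
  have hmemS : ∀ x, x ∈ FS ↔ x ∈ S := fun x => Set.Finite.mem_toFinset _
  have hcardA : FA.card = Nat.card A := by
    rw [Nat.card_coe_set_eq, Set.ncard_eq_toFinset_card A (Set.toFinite A)]
  have hcardS : FS.card = Nat.card S := by
    rw [Nat.card_coe_set_eq, Set.ncard_eq_toFinset_card S (Set.toFinite S)]
  have hcard : Fintype.card {x // x ∈ FA} = Fintype.card {x // x ∈ FS} := by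
    rw [Fintype.card_coe, Fintype.card_coe, hcardA, hcardS, hAS]
  let e := Fintype.equivOfCardEq hcard
  set n := FA.card with hn_def
  have hsymA : ∀ ξ, symFT A ξ = ∑ a ∈ FA, charVal q (sympForm a ξ) :=
    fun ξ => finsum_mem_eq_finite_toFinset_sum _ _
  have hsymS : ∀ ξ, symFT S ξ = ∑ s ∈ FS, charVal q (sympForm s ξ) :=
    fun ξ => finsum_mem_eq_finite_toFinset_sum _ _
  set N : Matrix {x // x ∈ FA} {x // x ∈ FA} ℂ :=
    Matrix.of (fun a b => charVal q (sympForm (a : ZMod q × ZMod q) ((e b : ZMod q × ZMod q)))) with hNdef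
  have h1 : N.conjTranspose * N = (n : ℂ) • 1 := by
    ext b b'
    rw [Matrix.mul_apply]
    simp only [Matrix.conjTranspose_apply, Matrix.smul_apply, Matrix.one_apply, hNdef,
      Matrix.of_apply, smul_eq_mul]
    have hterm : ∀ a : {x // x ∈ FA},
        star (charVal q (sympForm (a : ZMod q × ZMod q) ((e b : ZMod q × ZMod q)))) *
          charVal q (sympForm (a : ZMod q × ZMod q) ((e b' : ZMod q × ZMod q)))
        = charVal q (sympForm (a : ZMod q × ZMod q)
            (((e b' : ZMod q × ZMod q)) - ((e b : ZMod q × ZMod q)))) := by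
      intro a
      rw [star_charVal, ← charVal_add, ← sympForm_comb]
      ring_nf
    rw [Finset.sum_congr rfl fun a _ => hterm a]
    by_cases hbb : b = b'
    · subst hbb
      rw [if_pos rfl, mul_one]
      rw [Finset.sum_congr rfl fun a _ => by rw [sub_self, sympForm_zero_right, charVal_zero]]
      simp [Fintype.card_coe, hn_def]
    · rw [if_neg hbb, mul_zero]
      have hne : ((e b' : ZMod q × ZMod q)) ≠ ((e b : ZMod q × ZMod q)) := by
        intro hcontra
        exact hbb (e.injective (Subtype.ext hcontra)).symm
      have hz := hzero _ ((hmemS _).mp (e b').2) _ ((hmemS _).mp (e b).2) hne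
      rw [hsymA] at hz
      rw [← hz, ← Finset.sum_coe_sort FA
        (fun a => charVal q (sympForm a ((e b' : ZMod q × ZMod q) - (e b : ZMod q × ZMod q))))]
  have hnpos : 0 < n := by
    obtain ⟨a0, ha0⟩ := hA
    exact Finset.card_pos.mpr ⟨a0, (hmemA a0).mpr ha0⟩
  have hn : (n : ℂ) ≠ 0 := by exact_mod_cast hnpos.ne'
  have h1' : (((n : ℂ)⁻¹ • N.conjTranspose) * N) = 1 := by
    rw [Matrix.smul_mul, h1, smul_smul, inv_mul_cancel₀ hn, one_smul]
  have h2' : N * ((n : ℂ)⁻¹ • N.conjTranspose) = 1 := mul_eq_one_comm.mp h1'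
  have h2 : N * N.conjTranspose = (n : ℂ) • 1 := by
    have h3 := congrArg (fun M => (n : ℂ) • M) h2'
    simp only [Matrix.mul_smul, smul_smul, mul_inv_cancel₀ hn, one_smul] at h3
    rw [h3]
  intro a ha a' ha' hne
  have haF : a ∈ FA := (hmemA a).mpr ha
  have haF' : a' ∈ FA := (hmemA a').mpr ha'
  have hd : (⟨a, haF⟩ : {x // x ∈ FA}) ≠ ⟨a', haF'⟩ := fun hc => hne (congrArg Subtype.val hc)
  have hoff := congrFun (congrFun h2 ⟨a, haF⟩) ⟨a', haF'⟩
  rw [Matrix.mul_apply] at hoff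
  simp only [Matrix.conjTranspose_apply, Matrix.smul_apply, Matrix.one_apply, if_neg hd,
    smul_eq_mul, mul_zero, hNdef, Matrix.of_apply] at hoff
  have hterm : ∀ b : {x // x ∈ FA},
      charVal q (sympForm a ((e b : ZMod q × ZMod q))) *
        star (charVal q (sympForm a' ((e b : ZMod q × ZMod q))))
      = charVal q (sympForm ((e b : ZMod q × ZMod q)) (a' - a)) := by
    intro b
    rw [star_charVal, ← charVal_add]
    congr 1
    simp [sympForm]
    ring
  rw [Finset.sum_congr rfl fun b _ => hterm b] at hoff
  rw [Equiv.sum_comp e (fun s : {x // x ∈ FS} =>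
    charVal q (sympForm (s : ZMod q × ZMod q) (a' - a)))] at hoff
  rw [Finset.sum_coe_sort FS (fun s => charVal q (sympForm s (a' - a)))] at hoff
  rw [hsymS]
  exact hoff

end Part3


theorem spectral_large_is_tile (p m : ℕ) (hp : p.Prime) (hm : 1 ≤ m)
    (A : Set (ZMod (p ^ m) × ZMod (p ^ m)))
    (hspec : ∃ S, IsSympSpectralPair A S)
    (hlo : p ^ (2 * m - 1) ≤ Nat.card A) (hhi : Nat.card A < p ^ (2 * m)) :
    (∃ B, IsTilingPair A B) ∧ Nat.card A = p ^ (2 * m - 1) := by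
  classical
  haveI : NeZero (p ^ m) := ⟨pow_ne_zero m hp.ne_zero⟩
  obtain ⟨S, hAS, hzero⟩ := hspec
  have hppos : 0 < p := hp.pos
  have hpowpos : 0 < p ^ (2 * m - 1) := pow_pos hppos _
  have hApos : (0 : ℕ) < Nat.card A := lt_of_lt_of_le hpowpos hlo
  have hAne : A.Nonempty := by
    rw [Set.nonempty_iff_ne_empty]
    intro h
    rw [h] at hApos
    simp at hApos
  have hkey := Part3.key_transpose hAS hzero hAne
  have hcardG : Fintype.card (ZMod (p ^ m) × ZMod (p ^ m)) = p ^ (2 * m) := by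
    rw [Fintype.card_prod, ZMod.card, ← pow_add]
    congr 1
    ring
  have hSne : S ≠ Set.univ := by
    intro h
    rw [h] at hAS
    have huniv : Nat.card (↥(Set.univ : Set (ZMod (p ^ m) × ZMod (p ^ m)))) = p ^ (2 * m) := by
      rw [Nat.card_coe_set_eq, Set.ncard_univ, Nat.card_eq_fintype_card, hcardG]
    omega
  have hSneE : S.Nonempty := by
    rw [Set.nonempty_iff_ne_empty]
    intro h
    rw [h] at hAS
    have hemp : Nat.card (↥(∅ : Set (ZMod (p ^ m) × ZMod (p ^ m)))) = 0 := by simp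
    omega
  obtain ⟨v, hv0, hFv⟩ := Part2.exists_v S hSne hSneE
  have hgal : ∀ u : ZMod (p ^ m), IsUnit u → symFT S (u • v) ≠ 0 :=
    fun u hu hz => hFv (Part2.galois S v u hu hz)
  have unitdiff : ∀ {a b : ℕ}, a < p → b < p → b < a → IsUnit ((a : ZMod (p ^ m)) - (b : ZMod (p ^ m))) := by
    intro a b ha hb hba
    have h1 : ((a : ZMod (p ^ m)) - (b : ZMod (p ^ m))) = ((a - b : ℕ) : ZMod (p ^ m)) := by
      rw [Nat.cast_sub hba.le]
    rw [h1, ZMod.isUnit_iff_coprime]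
    have hnd : ¬ p ∣ (a - b) := by
      intro hd
      have h2 : 0 < a - b := by omega
      have := Nat.le_of_dvd h2 hd
      omega
    exact Nat.Coprime.pow_right m ((hp.coprime_iff_not_dvd.mpr hnd).symm)
  haveI : Fintype ↥A := Fintype.ofFinite _
  set Φ : ↥A × Fin p → ZMod (p ^ m) × ZMod (p ^ m) :=
    fun x => (x.1 : ZMod (p ^ m) × ZMod (p ^ m)) + (((x.2 : ℕ) : ZMod (p ^ m))) • v with hΦdef
  have hinj : Function.Injective Φ := by
    rintro ⟨a, j⟩ ⟨a', j'⟩ hEq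
    simp only [hΦdef] at hEq
    by_cases hjj : j = j'
    · subst hjj
      exact Prod.ext (Subtype.ext (add_right_cancel hEq)) rfl
    · exfalso
      have hu : IsUnit (((j' : ℕ) : ZMod (p ^ m)) - ((j : ℕ) : ZMod (p ^ m))) := by
        rcases lt_or_gt_of_ne (fun hc : (j : ℕ) = (j' : ℕ) => hjj (Fin.ext hc)) with h | h
        · exact unitdiff j'.isLt j.isLt h
        · have h5 := unitdiff j.isLt j'.isLt h
          rw [show ((j' : ℕ) : ZMod (p ^ m)) - ((j : ℕ) : ZMod (p ^ m))
              = -(((j : ℕ) : ZMod (p ^ m)) - ((j' : ℕ) : ZMod (p ^ m))) by ring]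
          exact h5.neg
      set u := ((j' : ℕ) : ZMod (p ^ m)) - ((j : ℕ) : ZMod (p ^ m)) with hu_def
      have hsub : (a : ZMod (p ^ m) × ZMod (p ^ m)) - (a' : ZMod (p ^ m) × ZMod (p ^ m)) = u • v := by
        rw [hu_def, sub_smul, sub_eq_sub_iff_add_eq_add, hEq, add_comm]
      have huv : u • v ≠ 0 := by
        intro h0
        obtain ⟨w, hw⟩ := hu
        apply hv0
        calc v = (1 : ZMod (p ^ m)) • v := (one_smul _ v).symm
          _ = (((w⁻¹ : (ZMod (p ^ m))ˣ) : ZMod (p ^ m)) * ((w : ZMod (p ^ m)))) • v := by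
                rw [show ((w⁻¹ : (ZMod (p ^ m))ˣ) : ZMod (p ^ m)) * ((w : ZMod (p ^ m))) = 1 by
                  rw [← Units.val_mul, inv_mul_cancel, Units.val_one], one_smul]
          _ = ((w⁻¹ : (ZMod (p ^ m))ˣ) : ZMod (p ^ m)) • (((w : ZMod (p ^ m))) • v) := by rw [mul_smul]
          _ = ((w⁻¹ : (ZMod (p ^ m))ˣ) : ZMod (p ^ m)) • (u • v) := by rw [hw]
          _ = 0 := by rw [h0, smul_zero]
      have hane : (a : ZMod (p ^ m) × ZMod (p ^ m)) ≠ (a' : ZMod (p ^ m) × ZMod (p ^ m)) := by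
        intro hc
        rw [hc, sub_self] at hsub
        exact huv hsub.symm
      have h4 : symFT S ((a : ZMod (p ^ m) × ZMod (p ^ m)) - (a' : ZMod (p ^ m) × ZMod (p ^ m))) = 0 :=
        hkey _ a'.2 _ a.2 (Ne.symm hane)
      rw [hsub] at h4
      exact hgal u hu h4
  have hcardA : Fintype.card ↥A = Nat.card A := Nat.card_eq_fintype_card.symm
  have hle : Nat.card A * p ≤ p ^ (2 * m) := by
    have h6 := Fintype.card_le_of_injective Φ hinj
    rwa [Fintype.card_prod, Fintype.card_fin, hcardG, hcardA] at h6
  have h2m : p ^ (2 * m) = p ^ (2 * m - 1) * p := by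
    rw [← pow_succ]
    congr 1
    omega
  have hAcard : Nat.card A = p ^ (2 * m - 1) :=
    le_antisymm (Nat.le_of_mul_le_mul_right (h2m ▸ hle) hppos) hlo
  have hbij : Function.Bijective Φ := by
    rw [Fintype.bijective_iff_injective_and_card]
    refine ⟨hinj, ?_⟩
    rw [Fintype.card_prod, Fintype.card_fin, hcardA, hAcard, hcardG, h2m]
  refine ⟨⟨Set.range (fun j : Fin p => ((j : ℕ) : ZMod (p ^ m)) • v), ?_⟩, hAcard⟩
  intro g
  obtain ⟨⟨a, j⟩, hg⟩ := hbij.surjective g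
  refine ⟨((a : ZMod (p ^ m) × ZMod (p ^ m)), ((j : ℕ) : ZMod (p ^ m)) • v), ⟨a.2, ⟨j, rfl⟩, hg⟩, ?_⟩
  rintro ⟨x, y⟩ ⟨hx, hy, hxy⟩
  obtain ⟨j', hj'⟩ := hy
  have hj'' : ((j' : ℕ) : ZMod (p ^ m)) • v = y := hj'
  have hxy' : x + y = g := hxy
  have hΦeq : Φ (⟨x, hx⟩, j') = Φ (a, j) := by
    simp only [hΦdef]
    show x + ((j' : ℕ) : ZMod (p ^ m)) • v = _
    rw [hj'', hxy']
    exact hg.symm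
  have h7 := hbij.injective hΦeq
  have hx2 : x = (a : ZMod (p ^ m) × ZMod (p ^ m)) :=
    congrArg (fun z : ↥A × Fin p => ((z.1 : ZMod (p ^ m) × ZMod (p ^ m)))) h7
  have hj2 : j' = j := congrArg Prod.snd h7
  rw [Prod.mk.injEq]
  exact ⟨hx2, by rw [← hj'', hj2]⟩
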